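/- arXiv:1905.13109 — 3 statements merged into one kernel-verified Lean document; each statement's English description precedes it below -/
import Mathlib

section
/- Let p be a prime, j,k ≥ 1 integers, and s, s', m, m' integers coprime to p. Define C_p = Σ_{γ mod p^{j+k}} S(m̄s̄, γs̄; p^j) · S(m̄'s̄', γs̄'; p^k) · e(s̄s̄'n₂γ / p^{j+k}), where S(a,b;q) denotes the Kloosterman sum and bars denote multiplicative inverses modulo the respective prime powers. Then C_p = 0 unless gcd(p^j, p^k) divides n₂, and in that case |C_p| ≤ p^{j+k} · gcd(p^j, p^k, n₂). -/
open scoped BigOperators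

/-- `e t = exp(2πit)`. -/
noncomputable def eAdd (t : ℝ) : ℂ := Complex.exp (2 * Real.pi * Complex.I * t)

/-- Kloosterman sum `S(a,b;q) = Σ*_{x mod q} e((ax + b x̄)/q)`, the star indicating that
`x` runs over residues coprime to `q`, and `x̄` the inverse of `x` mod `q`. -/
noncomputable def kloosterman (q : ℕ) (a b : ZMod q) : ℂ :=
  ∑ x ∈ Finset.filter (fun x => Nat.Coprime x q) (Finset.range q),
    eAdd ((((a * (x : ZMod q) + b * ((x : ZMod q))⁻¹).val : ℕ) : ℝ) / q)


lemma eAdd_add (x y : ℝ) : eAdd (x + y) = eAdd x * eAdd y := by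
  rw [eAdd, eAdd, eAdd, ← Complex.exp_add]; push_cast; ring_nf

lemma eAdd_int (n : ℤ) : eAdd n = 1 := by
  rw [eAdd]
  have h : (2 * Real.pi * Complex.I * ((n:ℝ):ℂ)) = (n:ℂ) * (2*Real.pi*Complex.I) := by
    push_cast; ring
  rw [h, Complex.exp_int_mul_two_pi_mul_I]

lemma eAdd_nat (n : ℕ) : eAdd n = 1 := by
  have := eAdd_int n; push_cast at this ⊢; exact this

lemma eAdd_abs (x : ℝ) : ‖eAdd x‖ = 1 := by
  rw [eAdd]
  have h : (2 * Real.pi * Complex.I * (x:ℂ)) = ((2*Real.pi*x : ℝ):ℂ) * Complex.I := by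
    push_cast; ring
  rw [h, Complex.norm_exp_ofReal_mul_I]

lemma eAdd_pow (x : ℝ) (n : ℕ) : eAdd x ^ n = eAdd (n * x) := by
  rw [eAdd, eAdd, ← Complex.exp_nat_mul]; push_cast; ring_nf


lemma eAdd_mod (n a : ℕ) : eAdd ((a:ℝ)/n) = eAdd (((a % n : ℕ):ℝ)/n) := by
  rcases Nat.eq_zero_or_pos n with h | h
  · simp [h]
  have h1 : (a:ℝ)/n = ((a % n : ℕ):ℝ)/n + ((a / n : ℕ):ℝ) := by
    have key : (a:ℝ) = ((a % n : ℕ):ℝ) + ((a / n : ℕ):ℝ) * n := by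
      exact_mod_cast (Nat.mod_add_div' a n).symm
    rw [key]
    field_simp
  rw [h1, eAdd_add, eAdd_nat, mul_one]

lemma eAdd_congr {n a b : ℕ} (h : (a : ZMod n) = (b : ZMod n)) :
    eAdd ((a:ℝ)/n) = eAdd ((b:ℝ)/n) := by
  rcases Nat.eq_zero_or_pos n with h0 | h0
  · subst h0; simpa using h
  haveI : NeZero n := ⟨h0.ne'⟩
  rw [ZMod.natCast_eq_natCast_iff] at h
  rw [eAdd_mod, eAdd_mod n b, h]

lemma two_pi_I_ne_zero : (2 * (Real.pi:ℂ) * Complex.I) ≠ 0 := by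
  simp [Real.pi_ne_zero, Complex.I_ne_zero]

lemma eAdd_eq_one_iff {Q E : ℕ} (hQ : Q ≠ 0) : eAdd ((E:ℝ)/Q) = 1 ↔ Q ∣ E := by
  constructor
  · intro h
    rw [eAdd, Complex.exp_eq_one_iff] at h
    obtain ⟨c, hc⟩ := h
    have hx : (((E:ℝ)/Q : ℝ):ℂ) = (c:ℂ) := by
      have : (2 * (Real.pi:ℂ) * Complex.I) * (((E:ℝ)/Q : ℝ):ℂ)
           = (2 * (Real.pi:ℂ) * Complex.I) * (c:ℂ) := by
        rw [hc]; push_cast; ring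
      exact mul_left_cancel₀ two_pi_I_ne_zero this
    have hr : (E:ℝ)/Q = (c:ℝ) := by exact_mod_cast congrArg Complex.re hx
    have hE : (E:ℝ) = (c:ℝ) * Q := by
      field_simp at hr; linarith [hr]
    have : (E:ℤ) = c * Q := by exact_mod_cast hE
    exact Int.natCast_dvd_natCast.mp ⟨c, by linarith⟩
  · rintro ⟨c, rfl⟩
    rw [Nat.cast_mul, mul_comm (Q:ℝ), mul_div_assoc, div_self (by positivity : (Q:ℝ) ≠ 0), mul_one, eAdd_nat]

lemma eAdd_geom (Q : ℕ) (hQ : Q ≠ 0) (E : ℕ) :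
    ∑ γ ∈ Finset.range Q, eAdd (((γ * E : ℕ):ℝ)/Q) = if Q ∣ E then (Q:ℂ) else 0 := by
  have hz : ∀ γ : ℕ, eAdd (((γ * E : ℕ):ℝ)/Q) = eAdd ((E:ℝ)/Q) ^ γ := by
    intro γ
    rw [eAdd_pow]
    congr 1
    push_cast
    ring
  simp only [hz]
  by_cases h : Q ∣ E
  · simp only [h, if_true]
    have h1 : eAdd ((E:ℝ)/Q) = 1 := (eAdd_eq_one_iff hQ).mpr h
    simp [h1]
  · simp only [h, if_false]
    have h1 : eAdd ((E:ℝ)/Q) ≠ 1 := fun hc => h ((eAdd_eq_one_iff hQ).mp hc)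
    rw [geom_sum_eq h1 Q]
    rw [eAdd_pow]
    have : eAdd ((Q:ℝ) * ((E:ℝ)/Q)) = 1 := by
      rw [mul_div_assoc', mul_comm, mul_div_assoc, div_self (by positivity : (Q:ℝ) ≠ 0), mul_one, eAdd_nat]
    rw [this]
    simp


lemma isUnit_intCast_zmod {s : ℤ} {n : ℕ} (h : IsCoprime s (n : ℤ)) : IsUnit ((s : ZMod n)) := by
  obtain ⟨a, b, hab⟩ := h
  refine IsUnit.of_mul_eq_one ((a : ZMod n)) ?_
  have h2 := congrArg (fun z : ℤ => ((z : ZMod n))) hab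
  push_cast at h2
  rw [ZMod.natCast_self, mul_zero, add_zero] at h2
  rw [mul_comm]; exact h2

lemma kloosterman_term (q : ℕ) [NeZero q] (a w : ZMod q) (γ : ℕ) :
    kloosterman q a ((γ : ZMod q) * w) =
      ∑ x ∈ Finset.filter (fun x => Nat.Coprime x q) (Finset.range q),
        eAdd (((a * x).val : ℝ)/q) * eAdd (((γ * (w * ((x:ZMod q))⁻¹).val : ℕ) : ℝ)/q) := by
  unfold kloosterman
  refine Finset.sum_congr rfl fun x hx => ?_
  rw [← eAdd_add]
  have h1 : ((a * x).val : ℝ)/q + ((γ * (w * ((x:ZMod q))⁻¹).val : ℕ) : ℝ)/q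
      = (((a * x).val + γ * (w * ((x:ZMod q))⁻¹).val : ℕ) : ℝ)/q := by
    push_cast; ring
  rw [h1]
  apply eAdd_congr
  push_cast [ZMod.natCast_val, ZMod.cast_id]
  ring

set_option maxHeartbeats 1000000 in
lemma main_rearrange (q1 q2 Q : ℕ) [NeZero q1] [NeZero q2] [NeZero Q]
    (hQ : Q = q1 * q2) (a1 w1 : ZMod q1) (a2 w2 : ZMod q2) (D : ZMod Q) :
    ∑ γ ∈ Finset.range Q,
      kloosterman q1 a1 ((γ : ZMod q1) * w1) * kloosterman q2 a2 ((γ : ZMod q2) * w2)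
        * eAdd (((D * (γ : ZMod Q)).val : ℝ) / (Q : ℕ))
    = ∑ x ∈ Finset.filter (fun x => Nat.Coprime x q1) (Finset.range q1),
        ∑ y ∈ Finset.filter (fun y => Nat.Coprime y q2) (Finset.range q2),
          (eAdd (((a1 * x).val : ℝ)/(q1:ℕ)) * eAdd (((a2 * y).val : ℝ)/(q2:ℕ))) *
          (if Q ∣ (q2 * (w1 * ((x : ZMod q1))⁻¹).val + q1 * (w2 * ((y : ZMod q2))⁻¹).val + D.val)
            then (Q : ℂ) else 0) := by
  have hq1 : (q1 : ℕ) ≠ 0 := NeZero.ne q1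
  have hq2 : (q2 : ℕ) ≠ 0 := NeZero.ne q2
  have hQ0 : (Q : ℕ) ≠ 0 := NeZero.ne Q
  have step1 : ∀ γ : ℕ,
      kloosterman q1 a1 ((γ : ZMod q1) * w1) * kloosterman q2 a2 ((γ : ZMod q2) * w2)
        * eAdd (((D * (γ : ZMod Q)).val : ℝ) / (Q : ℕ))
      = ∑ x ∈ Finset.filter (fun x => Nat.Coprime x q1) (Finset.range q1),
          ∑ y ∈ Finset.filter (fun y => Nat.Coprime y q2) (Finset.range q2),
            (eAdd (((a1 * x).val : ℝ)/(q1:ℕ)) * eAdd (((a2 * y).val : ℝ)/(q2:ℕ))) *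
            eAdd (((γ * (q2 * (w1 * ((x : ZMod q1))⁻¹).val + q1 * (w2 * ((y : ZMod q2))⁻¹).val + D.val) : ℕ) : ℝ)/(Q:ℕ)) := by
    intro γ
    rw [kloosterman_term, kloosterman_term, Finset.sum_mul_sum, Finset.sum_mul]
    refine Finset.sum_congr rfl fun x hx => ?_
    rw [Finset.sum_mul]
    refine Finset.sum_congr rfl fun y hy => ?_
    have e1 : eAdd (((γ * (w1 * ((x : ZMod q1))⁻¹).val : ℕ) : ℝ)/(q1:ℕ))
        = eAdd (((γ * (q2 * (w1 * ((x : ZMod q1))⁻¹).val) : ℕ) : ℝ)/(Q:ℕ)) := by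
      congr 1
      rw [hQ]
      push_cast
      field_simp
    have e2 : eAdd (((γ * (w2 * ((y : ZMod q2))⁻¹).val : ℕ) : ℝ)/(q2:ℕ))
        = eAdd (((γ * (q1 * (w2 * ((y : ZMod q2))⁻¹).val) : ℕ) : ℝ)/(Q:ℕ)) := by
      congr 1
      rw [hQ]
      push_cast
      field_simp
    have e3 : eAdd (((D * (γ : ZMod Q)).val : ℝ) / (Q:ℕ))
        = eAdd (((γ * D.val : ℕ) : ℝ)/(Q:ℕ)) := by
      have h := eAdd_congr (n := Q) (a := (D * (γ : ZMod Q)).val) (b := γ * D.val)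
        (by push_cast [ZMod.natCast_val, ZMod.cast_id]; ring)
      exact h
    have e4 : (((γ * (q2 * (w1 * ((x : ZMod q1))⁻¹).val) : ℕ) : ℝ)/(Q:ℕ)
        + ((γ * (q1 * (w2 * ((y : ZMod q2))⁻¹).val) : ℕ) : ℝ)/(Q:ℕ)
        + ((γ * D.val : ℕ) : ℝ)/(Q:ℕ))
        = ((γ * (q2 * (w1 * ((x : ZMod q1))⁻¹).val + q1 * (w2 * ((y : ZMod q2))⁻¹).val + D.val) : ℕ) : ℝ)/(Q:ℕ) := by
      push_cast
      field_simp
    rw [e1, e2, e3, ← e4, eAdd_add, eAdd_add]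
    ring
  rw [Finset.sum_congr rfl fun γ _ => step1 γ]
  rw [Finset.sum_comm]
  refine Finset.sum_congr rfl fun x hx => ?_
  rw [Finset.sum_comm]
  refine Finset.sum_congr rfl fun y hy => ?_
  rw [← Finset.mul_sum, eAdd_geom _ hQ0]

lemma zmod_inv_inj {n : ℕ} {a b : ZMod n} (ha : IsUnit a) (hb : IsUnit b)
    (h : a⁻¹ = b⁻¹) : a = b := by
  calc a = a * (b⁻¹ * b) := by rw [ZMod.inv_mul_of_unit b hb, mul_one]
    _ = a * a⁻¹ * b := by rw [← h]; ring
    _ = b := by rw [ZMod.mul_inv_of_unit a ha, one_mul]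

lemma nat_gcd_pow_min (p j k : ℕ) : Nat.gcd (p^j) (p^k) = p^(min j k) := by
  rcases le_total j k with h | h
  · rw [Nat.gcd_eq_left (pow_dvd_pow p h), min_eq_left h]
  · rw [Nat.gcd_eq_right (pow_dvd_pow p h), min_eq_right h]

theorem character_sum_prime_power
    (p : ℕ) (hp : p.Prime) (j k : ℕ) (hj : 1 ≤ j) (hk : 1 ≤ k)
    (s s' m m' n₂ : ℤ)
    (hs : IsCoprime s (p : ℤ)) (hs' : IsCoprime s' (p : ℤ))
    (hm : IsCoprime m (p : ℤ)) (hm' : IsCoprime m' (p : ℤ))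
    (C : ℂ)
    (hC : C = ∑ γ ∈ Finset.range (p ^ (j + k)),
      kloosterman (p ^ j) (((m : ZMod (p ^ j)))⁻¹ * ((s : ZMod (p ^ j)))⁻¹)
        ((γ : ZMod (p ^ j)) * ((s : ZMod (p ^ j)))⁻¹)
      * kloosterman (p ^ k) (((m' : ZMod (p ^ k)))⁻¹ * ((s' : ZMod (p ^ k)))⁻¹)
        ((γ : ZMod (p ^ k)) * ((s' : ZMod (p ^ k)))⁻¹)
      * eAdd (((((s : ZMod (p ^ (j + k))))⁻¹ * ((s' : ZMod (p ^ (j + k))))⁻¹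
          * (n₂ : ZMod (p ^ (j + k))) * (γ : ZMod (p ^ (j + k)))).val : ℝ) / (p ^ (j + k)))) :
    (¬ ((Nat.gcd (p ^ j) (p ^ k) : ℤ) ∣ n₂) → C = 0) ∧
    ‖C‖ ≤ (p : ℝ) ^ (j + k) * (Int.gcd (Int.gcd ((p : ℤ) ^ j) ((p : ℤ) ^ k)) n₂) := by
  classical
  have hp0 : p ≠ 0 := hp.pos.ne'
  have hq1 : (p^j : ℕ) ≠ 0 := pow_ne_zero _ hp0
  have hq2 : (p^k : ℕ) ≠ 0 := pow_ne_zero _ hp0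
  have hQ0 : (p^(j+k) : ℕ) ≠ 0 := pow_ne_zero _ hp0
  haveI i1 : NeZero (p^j : ℕ) := ⟨hq1⟩
  haveI i2 : NeZero (p^k : ℕ) := ⟨hq2⟩
  haveI i3 : NeZero (p^(j+k) : ℕ) := ⟨hQ0⟩
  haveI i4 : NeZero (p^(min j k) : ℕ) := ⟨pow_ne_zero _ hp0⟩
  have hcop : ∀ (a : ℤ), IsCoprime a (p:ℤ) → ∀ n : ℕ, IsUnit ((a : ZMod (p^n))) := by
    intro a ha n
    apply isUnit_intCast_zmod
    have h2 := ha.pow_right (n := n)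
    push_cast
    exact h2
  have hden : ((p:ℝ)) ^ (j+k) = ((p^(j+k) : ℕ) : ℝ) := by push_cast; ring
  rw [hden, main_rearrange (p^j) (p^k) (p^(j+k)) (pow_add p j k) _ _ _ _ _] at hC
  -- notation
  set F1 : Finset ℕ := Finset.filter (fun x => Nat.Coprime x (p^j)) (Finset.range (p^j)) with hF1
  set F2 : Finset ℕ := Finset.filter (fun y => Nat.Coprime y (p^k)) (Finset.range (p^k)) with hF2
  set d : ℕ := (((s : ZMod (p^(j+k))))⁻¹ * ((s' : ZMod (p^(j+k))))⁻¹ * (n₂ : ZMod (p^(j+k)))).val with hd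
  set v1 : ℕ → ℕ := fun x => (((s : ZMod (p^j)))⁻¹ * ((x : ZMod (p^j)))⁻¹).val with hv1
  set v2 : ℕ → ℕ := fun y => (((s' : ZMod (p^k)))⁻¹ * ((y : ZMod (p^k)))⁻¹).val with hv2
  set c1 : ℕ → ℂ := fun x => eAdd ((((((m : ZMod (p^j))))⁻¹ * ((s : ZMod (p^j)))⁻¹ * (x : ZMod (p^j))).val : ℝ)/((p^j : ℕ) : ℝ)) with hc1
  set c2 : ℕ → ℂ := fun y => eAdd ((((((m' : ZMod (p^k))))⁻¹ * ((s' : ZMod (p^k)))⁻¹ * (y : ZMod (p^k))).val : ℝ)/((p^k : ℕ) : ℝ)) with hc2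
  set T : Finset (ℕ × ℕ) := Finset.filter
      (fun z : ℕ × ℕ => p^(j+k) ∣ (p^k * v1 z.1 + p^j * v2 z.2 + d)) (F1 ×ˢ F2) with hT
  have key : C = ∑ z ∈ T, (c1 z.1 * c2 z.2) * ((p^(j+k) : ℕ) : ℂ) := by
    rw [hC, ← Finset.sum_product']
    rw [Finset.sum_filter]
    refine Finset.sum_congr rfl fun z hz => ?_
    simp only [mul_ite, mul_zero]
    rfl
  have fact1 : ∀ x y : ℕ, (p^(j+k) ∣ (p^k * v1 x + p^j * v2 y + d))
      → ((p^(min j k) : ℕ) : ℤ) ∣ n₂ := by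
    intro x y hdvd
    have h1 : (p^(min j k) : ℕ) ∣ p^(j+k) := pow_dvd_pow p (by omega)
    have hsum : (p^(min j k) : ℕ) ∣ (p^k * v1 x + p^j * v2 y + d) := h1.trans hdvd
    have h2 : (p^(min j k):ℕ) ∣ p^k * v1 x :=
      Dvd.dvd.mul_right (pow_dvd_pow p (min_le_right j k)) _
    have h3 : (p^(min j k):ℕ) ∣ p^j * v2 y :=
      Dvd.dvd.mul_right (pow_dvd_pow p (min_le_left j k)) _
    have h4 : (p^(min j k):ℕ) ∣ d := by
      have h5 := Nat.dvd_sub hsum (Nat.dvd_add h2 h3)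
      simpa using h5
    have hd0 : ((d : ZMod (p^(min j k)))) = 0 :=
      (ZMod.natCast_eq_zero_iff _ _).mpr h4
    have hD : ((s : ZMod (p^(j+k))))⁻¹ * ((s' : ZMod (p^(j+k))))⁻¹ * (n₂ : ZMod (p^(j+k)))
        * ((s : ZMod (p^(j+k))) * (s' : ZMod (p^(j+k)))) = (n₂ : ZMod (p^(j+k))) := by
      calc ((s : ZMod (p^(j+k))))⁻¹ * ((s' : ZMod (p^(j+k))))⁻¹ * (n₂ : ZMod (p^(j+k)))
          * ((s : ZMod (p^(j+k))) * (s' : ZMod (p^(j+k))))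
          = (((s : ZMod (p^(j+k))))⁻¹ * (s : ZMod (p^(j+k))))
            * ((((s' : ZMod (p^(j+k))))⁻¹) * (s' : ZMod (p^(j+k)))) * (n₂ : ZMod (p^(j+k))) := by
            ring
        _ = (n₂ : ZMod (p^(j+k))) := by
            rw [ZMod.inv_mul_of_unit _ (hcop s hs (j+k)), ZMod.inv_mul_of_unit _ (hcop s' hs' (j+k)),
              one_mul, one_mul]
    have hn0 : ((n₂ : ZMod (p^(min j k)))) = 0 := by
      set φ := ZMod.castHom (pow_dvd_pow p (show min j k ≤ j+k by omega))
        (ZMod (p^(min j k))) with hphi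
      have hφD : ((d : ZMod (p^(min j k))))
          = φ (((s : ZMod (p^(j+k))))⁻¹ * ((s' : ZMod (p^(j+k))))⁻¹ * (n₂ : ZMod (p^(j+k)))) := by
        rw [hd, ZMod.natCast_val, ZMod.castHom_apply]
      have hφ := congrArg φ hD
      rw [map_mul, map_intCast, ← hφD, hd0, zero_mul] at hφ
      exact hφ.symm
    exact (ZMod.intCast_zmod_eq_zero_iff_dvd n₂ (p^(min j k))).mp hn0
  -- injectivity in y (used when j ≤ k)
  have inj2 : ∀ x y1 y2 : ℕ, y1 ∈ F2 → y2 ∈ F2 →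
      (p^(j+k) ∣ (p^k * v1 x + p^j * v2 y1 + d)) →
      (p^(j+k) ∣ (p^k * v1 x + p^j * v2 y2 + d)) → y1 = y2 := by
    intro x y1 y2 hy1 hy2 h1 h2
    rw [hF2, Finset.mem_filter, Finset.mem_range] at hy1 hy2
    have hz : ((p^k : ℕ):ℤ) ∣ ((v2 y1 : ℤ) - (v2 y2 : ℤ)) := by
      have d1 : ((p^(j+k):ℕ):ℤ) ∣ (((p^k * v1 x + p^j * v2 y1 + d : ℕ) : ℤ)
          - ((p^k * v1 x + p^j * v2 y2 + d : ℕ) : ℤ)) :=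
        dvd_sub (Int.natCast_dvd_natCast.mpr h1) (Int.natCast_dvd_natCast.mpr h2)
      have e : (((p^k * v1 x + p^j * v2 y1 + d : ℕ) : ℤ)
          - ((p^k * v1 x + p^j * v2 y2 + d : ℕ) : ℤ))
          = ((p^j:ℕ):ℤ) * ((v2 y1:ℤ) - (v2 y2:ℤ)) := by push_cast; ring
      have hsplit : ((p^(j+k):ℕ):ℤ) = ((p^j:ℕ):ℤ) * ((p^k:ℕ):ℤ) := by
        push_cast [pow_add]; ring
      rw [e, hsplit] at d1
      exact (mul_dvd_mul_iff_left (show ((p^j:ℕ):ℤ) ≠ 0 by exact_mod_cast hq1)).mp d1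
    have b1 : v2 y1 < p^k := ZMod.val_lt _
    have b2 : v2 y2 < p^k := ZMod.val_lt _
    have hlt : |(v2 y1:ℤ) - (v2 y2:ℤ)| < ((p^k:ℕ):ℤ) := by
      rw [abs_lt]
      constructor
      · have := (Int.ofNat_lt).mpr b2; omega
      · have := (Int.ofNat_lt).mpr b1; omega
    have h0 : (v2 y1:ℤ) - (v2 y2:ℤ) = 0 := Int.eq_zero_of_abs_lt_dvd hz hlt
    have hveq : v2 y1 = v2 y2 := by omega
    have hval : ((s' : ZMod (p^k)))⁻¹ * ((y1 : ZMod (p^k)))⁻¹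
        = ((s' : ZMod (p^k)))⁻¹ * ((y2 : ZMod (p^k)))⁻¹ := by
      apply ZMod.val_injective
      exact hveq
    have hinv : ((y1 : ZMod (p^k)))⁻¹ = ((y2 : ZMod (p^k)))⁻¹ := by
      have hu : IsUnit (((s' : ZMod (p^k)))⁻¹) :=
        IsUnit.of_mul_eq_one _ (ZMod.inv_mul_of_unit _ (hcop s' hs' k))
      exact hu.mul_left_cancel hval
    have hy1u : IsUnit ((y1 : ZMod (p^k))) := (ZMod.isUnit_iff_coprime y1 (p^k)).mpr hy1.2
    have hy2u : IsUnit ((y2 : ZMod (p^k))) := (ZMod.isUnit_iff_coprime y2 (p^k)).mpr hy2.2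
    have heq := congrArg ZMod.val (zmod_inv_inj hy1u hy2u hinv)
    rwa [ZMod.val_cast_of_lt hy1.1, ZMod.val_cast_of_lt hy2.1] at heq
  -- injectivity in x (used when k ≤ j)
  have inj1 : ∀ y x1 x2 : ℕ, x1 ∈ F1 → x2 ∈ F1 →
      (p^(j+k) ∣ (p^k * v1 x1 + p^j * v2 y + d)) →
      (p^(j+k) ∣ (p^k * v1 x2 + p^j * v2 y + d)) → x1 = x2 := by
    intro y x1 x2 hx1 hx2 h1 h2
    rw [hF1, Finset.mem_filter, Finset.mem_range] at hx1 hx2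
    have hz : ((p^j : ℕ):ℤ) ∣ ((v1 x1 : ℤ) - (v1 x2 : ℤ)) := by
      have d1 : ((p^(j+k):ℕ):ℤ) ∣ (((p^k * v1 x1 + p^j * v2 y + d : ℕ) : ℤ)
          - ((p^k * v1 x2 + p^j * v2 y + d : ℕ) : ℤ)) :=
        dvd_sub (Int.natCast_dvd_natCast.mpr h1) (Int.natCast_dvd_natCast.mpr h2)
      have e : (((p^k * v1 x1 + p^j * v2 y + d : ℕ) : ℤ)
          - ((p^k * v1 x2 + p^j * v2 y + d : ℕ) : ℤ))
          = ((p^k:ℕ):ℤ) * ((v1 x1:ℤ) - (v1 x2:ℤ)) := by push_cast; ring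
      have hsplit : ((p^(j+k):ℕ):ℤ) = ((p^k:ℕ):ℤ) * ((p^j:ℕ):ℤ) := by
        push_cast [pow_add]; ring
      rw [e, hsplit] at d1
      exact (mul_dvd_mul_iff_left (show ((p^k:ℕ):ℤ) ≠ 0 by exact_mod_cast hq2)).mp d1
    have b1 : v1 x1 < p^j := ZMod.val_lt _
    have b2 : v1 x2 < p^j := ZMod.val_lt _
    have hlt : |(v1 x1:ℤ) - (v1 x2:ℤ)| < ((p^j:ℕ):ℤ) := by
      rw [abs_lt]
      constructor
      · have := (Int.ofNat_lt).mpr b2; omega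
      · have := (Int.ofNat_lt).mpr b1; omega
    have h0 : (v1 x1:ℤ) - (v1 x2:ℤ) = 0 := Int.eq_zero_of_abs_lt_dvd hz hlt
    have hveq : v1 x1 = v1 x2 := by omega
    have hval : ((s : ZMod (p^j)))⁻¹ * ((x1 : ZMod (p^j)))⁻¹
        = ((s : ZMod (p^j)))⁻¹ * ((x2 : ZMod (p^j)))⁻¹ := by
      apply ZMod.val_injective
      exact hveq
    have hinv : ((x1 : ZMod (p^j)))⁻¹ = ((x2 : ZMod (p^j)))⁻¹ := by
      have hu : IsUnit (((s : ZMod (p^j)))⁻¹) :=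
        IsUnit.of_mul_eq_one _ (ZMod.inv_mul_of_unit _ (hcop s hs j))
      exact hu.mul_left_cancel hval
    have hx1u : IsUnit ((x1 : ZMod (p^j))) := (ZMod.isUnit_iff_coprime x1 (p^j)).mpr hx1.2
    have hx2u : IsUnit ((x2 : ZMod (p^j))) := (ZMod.isUnit_iff_coprime x2 (p^j)).mpr hx2.2
    have heq := congrArg ZMod.val (zmod_inv_inj hx1u hx2u hinv)
    rwa [ZMod.val_cast_of_lt hx1.1, ZMod.val_cast_of_lt hx2.1] at heq
  -- cardinality bound
  have hTcard : T.card ≤ p^(min j k) := by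
    rcases le_total j k with hjk | hjk
    · rw [min_eq_left hjk]
      have h1 : T.card ≤ F1.card := by
        apply Finset.card_le_card_of_injOn (fun z => z.1)
        · intro z hz
          rw [Finset.mem_coe, hT, Finset.mem_filter, Finset.mem_product] at hz
          exact hz.1.1
        · intro z1 h1 z2 h2 he
          rw [Finset.coe_filter] at h1 h2
          simp only [Set.mem_setOf_eq, Finset.mem_product] at h1 h2
          have hx : z1.1 = z2.1 := he
          refine Prod.ext hx ?_
          exact inj2 z1.1 z1.2 z2.2 h1.1.2 h2.1.2 h1.2 (hx ▸ h2.2)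
      calc T.card ≤ F1.card := h1
        _ ≤ p^j := by rw [hF1]; exact (Finset.card_filter_le _ _).trans (by simp)
    · rw [min_eq_right hjk]
      have h1 : T.card ≤ F2.card := by
        apply Finset.card_le_card_of_injOn (fun z => z.2)
        · intro z hz
          rw [Finset.mem_coe, hT, Finset.mem_filter, Finset.mem_product] at hz
          exact hz.1.2
        · intro z1 h1 z2 h2 he
          rw [Finset.coe_filter] at h1 h2
          simp only [Set.mem_setOf_eq, Finset.mem_product] at h1 h2
          have hy : z1.2 = z2.2 := he
          refine Prod.ext ?_ hy
          exact inj1 z1.2 z1.1 z2.1 h1.1.1 h2.1.1 h1.2 (hy ▸ h2.2)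
      calc T.card ≤ F2.card := h1
        _ ≤ p^k := by rw [hF2]; exact (Finset.card_filter_le _ _).trans (by simp)
  -- vanishing
  have hempty : ¬ (((p^(min j k) : ℕ) : ℤ) ∣ n₂) → T = ∅ := by
    intro h
    apply Finset.eq_empty_of_forall_notMem
    intro z hz
    rw [hT, Finset.mem_filter] at hz
    exact h (fact1 z.1 z.2 hz.2)
  have part1 : ¬ ((Nat.gcd (p ^ j) (p ^ k) : ℤ) ∣ n₂) → C = 0 := by
    intro h
    have h' : ¬ (((p^(min j k) : ℕ) : ℤ) ∣ n₂) := by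
      rwa [nat_gcd_pow_min] at h
    rw [key, hempty h', Finset.sum_empty]
  refine ⟨part1, ?_⟩
  by_cases hdvd : (((p^(min j k) : ℕ) : ℤ) ∣ n₂)
  · -- gcd computation
    have hg1 : Int.gcd ((p:ℤ)^j) ((p:ℤ)^k) = p^(min j k) := by
      rw [Int.gcd]
      simp only [Int.natAbs_pow, Int.natAbs_natCast]
      exact nat_gcd_pow_min p j k
    have hg2 : Int.gcd ((Int.gcd ((p:ℤ)^j) ((p:ℤ)^k) : ℕ) : ℤ) n₂ = p^(min j k) := by
      rw [hg1]; exact_mod_cast Int.gcd_eq_left (by positivity) hdvd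
    have habs1 : ∀ z : ℕ × ℕ, ‖c1 z.1 * c2 z.2 * ((p^(j+k):ℕ):ℂ)‖
        = ((p^(j+k):ℕ):ℝ) := by
      intro z
      rw [norm_mul, norm_mul, hc1, hc2]
      simp [eAdd_abs, Complex.norm_natCast]
    calc ‖C‖ ≤ ∑ z ∈ T, ‖c1 z.1 * c2 z.2 * ((p^(j+k):ℕ):ℂ)‖ := by
          rw [key]; exact norm_sum_le _ _
      _ = T.card * ((p^(j+k):ℕ):ℝ) := by
          rw [Finset.sum_congr rfl fun z _ => habs1 z, Finset.sum_const, nsmul_eq_mul]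
      _ ≤ (p^(min j k) : ℕ) * ((p^(j+k):ℕ):ℝ) := by
          apply mul_le_mul_of_nonneg_right _ (by positivity)
          exact_mod_cast hTcard
      _ = (p : ℝ) ^ (j + k) * (Int.gcd (Int.gcd ((p : ℤ) ^ j) ((p : ℤ) ^ k)) n₂) := by
          rw [hg2]
          push_cast
          ring
  · have h0 : C = 0 := by rw [key, hempty hdvd, Finset.sum_empty]
    rw [h0, norm_zero]
    positivity
end

section
/- Let q be a positive integer, n₁ | q, and m, m' integers coprime to q. For n₂ = 0, the character sum C = Σ_{γ mod q²/n₁²} S(m̄, γ; q/n₁) · S(m̄', γ; q/n₁) equals (q²/n₁²) · Σ*_{c mod q/n₁} e(c(m − m')/(q/n₁)). -/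
open scoped BigOperators

section aux
variable {N : ℕ} [NeZero N]

lemma eAdd_val (x : ZMod N) : eAdd ((x.val : ℝ) / N) = ZMod.stdAddChar x := by
  rw [ZMod.stdAddChar_apply, ZMod.toCircle_apply, eAdd]
  push_cast
  ring_nf

lemma sum_range_zmod (F : ZMod N → ℂ) :
    ∑ γ ∈ Finset.range N, F (γ : ZMod N) = ∑ x : ZMod N, F x := by
  refine Finset.sum_nbij' (fun γ => (γ : ZMod N)) (fun x => x.val) ?_ ?_ ?_ ?_ ?_
  · intro a _; exact Finset.mem_univ _
  · intro x _; exact Finset.mem_range.mpr (ZMod.val_lt x)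
  · intro a ha; exact ZMod.val_cast_of_lt (Finset.mem_range.mp ha)
  · intro x _; exact ZMod.natCast_zmod_val x
  · intro a _; rfl

lemma sum_range_mul_zmod (a : ℕ) (F : ZMod N → ℂ) :
    ∑ γ ∈ Finset.range (a * N), F (γ : ZMod N) = a * ∑ x : ZMod N, F x := by
  induction a with
  | zero => simp
  | succ n ih =>
    rw [Nat.succ_mul, Finset.sum_range_add, ih]
    have : ∑ i ∈ Finset.range N, F ((n * N + i : ℕ) : ZMod N)
        = ∑ x : ZMod N, F x := by
      rw [← sum_range_zmod]
      refine Finset.sum_congr rfl fun i _ => ?_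
      push_cast
      simp [ZMod.natCast_self]
    rw [this]
    push_cast
    ring

lemma sum_filter_coprime (F : ZMod N → ℂ) :
    ∑ x ∈ Finset.filter (fun x => Nat.Coprime x N) (Finset.range N), F (x : ZMod N)
      = ∑ u : (ZMod N)ˣ, F u := by
  refine Finset.sum_bij' (fun x hx => ZMod.unitOfCoprime x (Finset.mem_filter.mp hx).2)
    (fun u _ => (u : ZMod N).val) (fun a _ => Finset.mem_univ _) ?_ ?_ ?_ ?_
  · intro u _
    exact Finset.mem_filter.mpr ⟨Finset.mem_range.mpr (ZMod.val_lt _),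
      ZMod.val_coe_unit_coprime u⟩
  · intro x hx
    show ((ZMod.unitOfCoprime x _ : (ZMod N)ˣ) : ZMod N).val = x
    rw [ZMod.coe_unitOfCoprime, ZMod.val_cast_of_lt (Finset.mem_range.mp (Finset.mem_filter.mp hx).1)]
  · intro u _
    ext
    show ((ZMod.unitOfCoprime _ _ : (ZMod N)ˣ) : ZMod N) = (u : ZMod N)
    rw [ZMod.coe_unitOfCoprime, ZMod.natCast_zmod_val]
  · intro x hx
    show F _ = F _
    rw [ZMod.coe_unitOfCoprime]

end aux

section main
variable {N : ℕ} [NeZero N]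

open ZMod AddChar

lemma inv_add_inv_eq_zero_iff (u v : (ZMod N)ˣ) :
    ((u : ZMod N)⁻¹ + (v : ZMod N)⁻¹ = 0) ↔ v = -u := by
  rw [ZMod.inv_coe_unit, ZMod.inv_coe_unit]
  constructor
  · intro h
    have h1 : ((u⁻¹ : (ZMod N)ˣ) : ZMod N) = ((-v⁻¹ : (ZMod N)ˣ) : ZMod N) := by
      rw [Units.val_neg]
      linear_combination h
    have h2 : u⁻¹ = -v⁻¹ := Units.ext h1
    have h3 : u = -v := by
      have := congrArg (·⁻¹) h2
      simpa [inv_neg] using this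
    simp [h3]
  · rintro rfl
    rw [inv_neg, Units.val_neg]
    ring

lemma key_sum (A B : ZMod N) :
    ∑ g : ZMod N, (∑ u : (ZMod N)ˣ, ZMod.stdAddChar (A * (u : ZMod N) + g * (u : ZMod N)⁻¹))
        * (∑ v : (ZMod N)ˣ, ZMod.stdAddChar (B * (v : ZMod N) + g * (v : ZMod N)⁻¹))
      = N * ∑ u : (ZMod N)ˣ, ZMod.stdAddChar ((A - B) * (u : ZMod N)) := by
  classical
  simp_rw [Finset.sum_mul_sum]
  rw [Finset.sum_comm]
  have step1 : ∀ u : (ZMod N)ˣ,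
      ∑ g : ZMod N, ∑ v : (ZMod N)ˣ,
          ZMod.stdAddChar (A * (u : ZMod N) + g * (u : ZMod N)⁻¹)
          * ZMod.stdAddChar (B * (v : ZMod N) + g * (v : ZMod N)⁻¹)
        = ZMod.stdAddChar (A * (u : ZMod N) + B * (-(u : ZMod N))) * N := by
    intro u
    rw [Finset.sum_comm]
    have inner : ∀ v : (ZMod N)ˣ,
        ∑ g : ZMod N, ZMod.stdAddChar (A * (u : ZMod N) + g * (u : ZMod N)⁻¹)
            * ZMod.stdAddChar (B * (v : ZMod N) + g * (v : ZMod N)⁻¹)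
          = ZMod.stdAddChar (A * (u : ZMod N)) * ZMod.stdAddChar (B * (v : ZMod N))
            * if ((u : ZMod N)⁻¹ + (v : ZMod N)⁻¹) = 0 then (N : ℂ) else 0 := by
      intro v
      have : ∀ g : ZMod N,
          ZMod.stdAddChar (A * (u : ZMod N) + g * (u : ZMod N)⁻¹)
            * ZMod.stdAddChar (B * (v : ZMod N) + g * (v : ZMod N)⁻¹)
          = ZMod.stdAddChar (A * (u : ZMod N)) * ZMod.stdAddChar (B * (v : ZMod N))
            * ZMod.stdAddChar (g * ((u : ZMod N)⁻¹ + (v : ZMod N)⁻¹)) := by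
        intro g
        rw [AddChar.map_add_eq_mul, AddChar.map_add_eq_mul, mul_add,
          AddChar.map_add_eq_mul]
        ring
      simp_rw [this]
      rw [← Finset.mul_sum, AddChar.sum_mulShift _ (ZMod.isPrimitive_stdAddChar N),
        ZMod.card]
      split_ifs <;> simp
    simp_rw [inner, inv_add_inv_eq_zero_iff, mul_ite, mul_zero]
    rw [Finset.sum_ite_eq' Finset.univ (-u)
      (fun v : (ZMod N)ˣ => ZMod.stdAddChar (A * (u : ZMod N)) * ZMod.stdAddChar (B * (v : ZMod N)) * (N : ℂ))]
    simp [AddChar.map_add_eq_mul]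
  simp_rw [step1]
  have : ∀ u : (ZMod N)ˣ,
      ZMod.stdAddChar (A * (u : ZMod N) + B * (-(u : ZMod N))) = ZMod.stdAddChar ((A - B) * (u : ZMod N)) := by
    intro u; congr 1; ring
  simp_rw [this]
  rw [← Finset.sum_mul]
  ring

set_option maxHeartbeats 1000000 in
lemma reindex_sum (a b : ZMod N) (ha : IsUnit a) (hb : IsUnit b) :
    ∑ u : (ZMod N)ˣ, ZMod.stdAddChar ((a⁻¹ - b⁻¹) * (u : ZMod N))
      = ∑ u : (ZMod N)ˣ, ZMod.stdAddChar ((a - b) * (u : ZMod N)) := by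
  obtain ⟨U, hU⟩ := ha
  obtain ⟨V, hV⟩ := hb
  have ha' : a * a⁻¹ = 1 := ZMod.mul_inv_of_unit a ⟨U, hU⟩
  have hb' : b * b⁻¹ = 1 := ZMod.mul_inv_of_unit b ⟨V, hV⟩
  refine (Fintype.sum_equiv ((Equiv.mulRight (U * V)).trans (Equiv.neg ((ZMod N)ˣ)))
    (fun u => ZMod.stdAddChar ((a - b) * (u : ZMod N)))
    (fun u => ZMod.stdAddChar ((a⁻¹ - b⁻¹) * (u : ZMod N))) ?_).symm
  intro x
  refine congrArg (⇑(ZMod.stdAddChar (N := N))) ?_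
  rw [Equiv.trans_apply, Equiv.coe_mulRight, Equiv.neg_apply, Units.val_neg, Units.val_mul,
    Units.val_mul, hU, hV]
  calc (a - b) * (x : ZMod N)
      = -((x : ZMod N)) * (b * (a * a⁻¹) - a * (b * b⁻¹)) := by rw [ha', hb']; ring
    _ = (a⁻¹ - b⁻¹) * -((x : ZMod N) * (a * b)) := by ring

end main

theorem character_sum_zero_frequency
    (q n₁ : ℕ) (hq : 0 < q) (hn₁ : n₁ ∣ q)
    (m m' : ℤ) (hm : Int.gcd m q = 1) (hm' : Int.gcd m' q = 1) :
    ∑ γ ∈ Finset.range (q ^ 2 / n₁ ^ 2),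
        kloosterman (q / n₁) ((m : ZMod (q / n₁)))⁻¹ (γ : ZMod (q / n₁))
        * kloosterman (q / n₁) ((m' : ZMod (q / n₁)))⁻¹ (γ : ZMod (q / n₁))
      = (q ^ 2 / n₁ ^ 2 : ℕ)
        * ∑ c ∈ Finset.filter (fun c => Nat.Coprime c (q / n₁)) (Finset.range (q / n₁)),
            eAdd (((((c : ZMod (q / n₁)) * ((m - m' : ℤ) : ZMod (q / n₁))).val : ℕ) : ℝ)
              / (q / n₁)) := by
  have hn₁pos : 0 < n₁ := Nat.pos_of_dvd_of_pos hn₁ hq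
  have hN : 0 < q / n₁ := Nat.div_pos (Nat.le_of_dvd hq hn₁) hn₁pos
  haveI : NeZero (q / n₁) := ⟨hN.ne'⟩
  have hNd : q / n₁ ∣ q := Nat.div_dvd_of_dvd hn₁
  have hq2 : q ^ 2 / n₁ ^ 2 = (q / n₁) * (q / n₁) := by
    obtain ⟨k, hk⟩ := hn₁
    subst hk
    rw [Nat.mul_div_cancel_left _ hn₁pos, mul_pow,
      Nat.mul_div_cancel_left _ (pow_pos hn₁pos 2), sq]
  -- units
  have unit_of : ∀ t : ℤ, Int.gcd t q = 1 → IsUnit ((t : ZMod (q / n₁))) := by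
    intro t ht
    have hcop : IsCoprime t (q : ℤ) := Int.isCoprime_iff_gcd_eq_one.mpr ht
    have hcop2 : IsCoprime t ((q / n₁ : ℕ) : ℤ) :=
      hcop.of_isCoprime_of_dvd_right (Int.natCast_dvd_natCast.mpr hNd)
    obtain ⟨a, b, hab⟩ := hcop2
    apply IsUnit.of_mul_eq_one (a := (t : ZMod (q / n₁))) ((a : ZMod (q / n₁)))
    have h2 := congrArg (fun z : ℤ => ((z : ZMod (q / n₁)))) hab
    simp only [Int.cast_add, Int.cast_mul, Int.cast_one, Int.cast_natCast,
      ZMod.natCast_self, mul_zero, add_zero] at h2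
    rw [mul_comm] at h2
    exact h2
  have hm1 : IsUnit ((m : ZMod (q / n₁))) := unit_of m hm
  have hm'1 : IsUnit ((m' : ZMod (q / n₁))) := unit_of m' hm'
  have kl : ∀ a b : ZMod (q / n₁), kloosterman (q / n₁) a b
      = ∑ u : (ZMod (q / n₁))ˣ,
          ZMod.stdAddChar (a * (u : ZMod (q / n₁)) + b * ((u : ZMod (q / n₁)))⁻¹) := by
    intro a b
    rw [kloosterman,
      ← sum_filter_coprime (fun x : ZMod (q / n₁) => ZMod.stdAddChar (a * x + b * x⁻¹))]
    exact Finset.sum_congr rfl fun x _ => eAdd_val _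
  rw [hq2]
  rw [sum_range_mul_zmod (q / n₁)
    (fun x => kloosterman (q / n₁) ((m : ZMod (q / n₁)))⁻¹ x
      * kloosterman (q / n₁) ((m' : ZMod (q / n₁)))⁻¹ x)]
  simp only [kl]
  rw [key_sum]
  -- now the right-hand side
  have hden : ((q : ℝ) / (n₁ : ℝ)) = ((q / n₁ : ℕ) : ℝ) :=
    (Nat.cast_div hn₁ (by exact_mod_cast hn₁pos.ne')).symm
  simp only [hden, eAdd_val]
  rw [sum_filter_coprime
    (fun x : ZMod (q / n₁) => ZMod.stdAddChar (x * ((m - m' : ℤ) : ZMod (q / n₁))))]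
  have hΔ : ((m - m' : ℤ) : ZMod (q / n₁)) = (m : ZMod (q / n₁)) - (m' : ZMod (q / n₁)) := by
    push_cast; ring
  simp only [hΔ]
  have hcomm : ∑ u : (ZMod (q / n₁))ˣ,
      ZMod.stdAddChar ((u : ZMod (q / n₁)) * ((m : ZMod (q / n₁)) - (m' : ZMod (q / n₁))))
      = ∑ u : (ZMod (q / n₁))ˣ,
      ZMod.stdAddChar (((m : ZMod (q / n₁)) - (m' : ZMod (q / n₁))) * (u : ZMod (q / n₁))) :=
    Finset.sum_congr rfl fun u _ => by rw [mul_comm]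
  rw [hcomm]
  rw [← reindex_sum ((m : ZMod (q / n₁))) ((m' : ZMod (q / n₁))) hm1 hm'1]
  push_cast
  ring
end

section
/- Let C ≥ 1 and n₁ a positive integer. Then Σ_{q ∼ C} Σ_{|m|,|m'| ≤ M, m ≠ m'} gcd(m − m', q/n₁)^{1/2} · (q/n₁)^{1/2} · τ(q/n₁) ≪_ε M² · C^{3/2 + ε} · n₁^{-1/2}, where the q-sum runs over integers q in (C, 2C] divisible by n₁, τ is the divisor function, and M ≥ 1. -/
open Finset Real

lemma sum_le_sum_inj {α β : Type*} [DecidableEq β] {s : Finset α} {t : Finset β}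
    (i : α → β) (hi : Set.InjOn i s) (hmap : ∀ x ∈ s, i x ∈ t)
    (f : α → ℝ) (g : β → ℝ) (hfg : ∀ x ∈ s, f x ≤ g (i x)) (hg : ∀ y ∈ t, 0 ≤ g y) :
    ∑ x ∈ s, f x ≤ ∑ y ∈ t, g y := by
  calc ∑ x ∈ s, f x ≤ ∑ x ∈ s, g (i x) := Finset.sum_le_sum hfg
    _ = ∑ y ∈ s.image i, g y := (Finset.sum_image (fun a ha b hb h => hi ha hb h)).symm
    _ ≤ ∑ y ∈ t, g y := Finset.sum_le_sum_of_subset_of_nonneg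
        (Finset.image_subset_iff.2 hmap) (fun y hy _ => hg y hy)

lemma tau_mul_le (m n : ℕ) :
    ((m * n).divisors.card : ℝ) ≤ (m.divisors.card : ℝ) * (n.divisors.card : ℝ) := by
  rw [Nat.divisors_mul]
  exact_mod_cast Finset.card_mul_le

lemma harmonic_bound (E : ℕ) :
    ∑ b ∈ Finset.Icc 1 E, (1 : ℝ) / b ≤ 1 + Real.log E := by
  have h := harmonic_le_one_add_log E
  have h2 : (harmonic E : ℝ) = ∑ b ∈ Finset.Icc 1 E, (1 : ℝ) / b := by
    rw [harmonic]
    push_cast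
    rw [show Finset.Icc 1 E = Finset.Ico 1 (E+1) by rfl, Finset.sum_Ico_eq_sum_range]
    simp [add_comm, one_div]
  rw [h2] at h
  exact_mod_cast h

lemma pow32_aux : ∀ A : ℕ, 1 ≤ A →
    ∑ u ∈ Finset.Icc 1 A, 1 / ((u : ℝ) * Real.sqrt u) ≤ 3 - 2 / Real.sqrt A := by
  intro A
  induction A with
  | zero => intro h; omega
  | succ n ih =>
    intro _
    rcases Nat.eq_or_lt_of_le (Nat.one_le_iff_ne_zero.2 (Nat.succ_ne_zero n)) with h1 | h1
    · have : n = 0 := by omega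
      subst this
      norm_num
    · have hn : 1 ≤ n := by omega
      rw [Finset.sum_Icc_succ_top (by omega)]
      have key : 1 / (((n+1 : ℕ) : ℝ) * Real.sqrt ((n+1 : ℕ))) ≤
          2 / Real.sqrt n - 2 / Real.sqrt ((n+1 : ℕ)) := by
        set a := Real.sqrt n with ha
        set b := Real.sqrt ((n+1 : ℕ)) with hb
        have ha2 : a ^ 2 = (n : ℝ) := Real.sq_sqrt (by positivity)
        have hb2 : b ^ 2 = ((n+1 : ℕ) : ℝ) := Real.sq_sqrt (by positivity)
        have hapos : 0 < a := Real.sqrt_pos.2 (by exact_mod_cast hn)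
        have hbpos : 0 < b := Real.sqrt_pos.2 (by positivity)
        have hab : a ≤ b := Real.sqrt_le_sqrt (by push_cast; linarith)
        have hdiff : b ^ 2 - a ^ 2 = 1 := by rw [ha2, hb2]; push_cast; ring
        rw [show (((n+1 : ℕ) : ℝ)) = b ^ 2 from hb2.symm]
        rw [div_sub_div _ _ (ne_of_gt hapos) (ne_of_gt hbpos), div_le_div_iff₀ (by positivity) (by positivity)]
        nlinarith [mul_pos hapos hbpos, sq_nonneg (b - a), mul_pos (mul_pos hapos hbpos) hbpos]
      have := ih hn
      have hcast : ((n+1 : ℕ) : ℝ) = (n : ℝ) + 1 := by push_cast; ring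
      linarith

lemma count_multiples (E b : ℕ) : ((Finset.Icc 1 E).filter (fun e => b ∣ e)).card ≤ E / b := by
  rcases Nat.eq_zero_or_pos b with hb | hb
  · subst hb
    rcases Nat.eq_zero_or_pos E with hE | hE
    · subst hE; simp
    · have : (Finset.Icc 1 E).filter (fun e => 0 ∣ e) = ∅ := by
        ext e; simp only [Finset.mem_filter, Finset.mem_Icc, Finset.notMem_empty, iff_false]
        rintro ⟨⟨h1, _⟩, h0⟩
        simp only [zero_dvd_iff] at h0; omega
      rw [this]; simp
  · have : ((Finset.Icc 1 E).filter (fun e => b ∣ e)).card ≤ (Finset.Icc 1 (E / b)).card := by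
      apply Finset.card_le_card_of_injOn (fun e => e / b)
      · intro e he
        simp only [Finset.mem_coe, Finset.mem_filter, Finset.mem_Icc] at he
        obtain ⟨⟨h1, h2⟩, hd⟩ := he
        simp only [Finset.mem_coe, Finset.mem_Icc]
        constructor
        · exact Nat.one_le_div_iff hb |>.2 (Nat.le_of_dvd (by omega) hd)
        · exact Nat.div_le_div_right h2
      · intro x hx y hy hxy
        simp only [Finset.mem_coe, Finset.mem_filter] at hx hy
        simp only at hxy
        have hx' := Nat.div_mul_cancel hx.2
        have hy' := Nat.div_mul_cancel hy.2
        rw [← hx', ← hy', hxy]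
    simpa using this

lemma tau_sum_le (E : ℕ) : ∑ e ∈ Finset.Icc 1 E, ((e.divisors.card : ℝ)) ≤ E * (1 + Real.log E) := by
  have step1 : ∀ e ∈ Finset.Icc 1 E, ((e.divisors.card : ℝ)) =
      ∑ b ∈ Finset.Icc 1 E, (if b ∣ e then (1:ℝ) else 0) := by
    intro e he
    simp only [Finset.mem_Icc] at he
    rw [Finset.sum_boole]
    congr 2
    ext g
    simp only [Nat.mem_divisors, Finset.mem_filter, Finset.mem_Icc]
    constructor
    · rintro ⟨hg, he0⟩
      exact ⟨⟨Nat.one_le_iff_ne_zero.2 (by rintro rfl; simp at hg; omega),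
        le_trans (Nat.le_of_dvd (by omega) hg) he.2⟩, hg⟩
    · rintro ⟨_, hg⟩
      exact ⟨hg, by omega⟩
  calc ∑ e ∈ Finset.Icc 1 E, ((e.divisors.card : ℝ))
      = ∑ e ∈ Finset.Icc 1 E, ∑ b ∈ Finset.Icc 1 E, (if b ∣ e then (1:ℝ) else 0) :=
        Finset.sum_congr rfl step1
    _ = ∑ b ∈ Finset.Icc 1 E, ∑ e ∈ Finset.Icc 1 E, (if b ∣ e then (1:ℝ) else 0) :=
        Finset.sum_comm
    _ ≤ ∑ b ∈ Finset.Icc 1 E, (E : ℝ) / b := by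
        apply Finset.sum_le_sum
        intro b hb
        simp only [Finset.mem_Icc] at hb
        rw [Finset.sum_boole]
        calc ((((Finset.Icc 1 E).filter (fun e => b ∣ e)).card : ℝ))
            ≤ ((E / b : ℕ) : ℝ) := by exact_mod_cast count_multiples E b
          _ ≤ (E : ℝ) / b := Nat.cast_div_le
    _ = (E : ℝ) * ∑ b ∈ Finset.Icc 1 E, 1 / (b : ℝ) := by
        rw [Finset.mul_sum]; apply Finset.sum_congr rfl; intros; ring
    _ ≤ E * (1 + Real.log E) := by
        apply mul_le_mul_of_nonneg_left (harmonic_bound E) (by positivity)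

lemma pow32_sum (A : ℕ) : ∑ u ∈ Finset.Icc 1 A, 1 / ((u : ℝ) * Real.sqrt u) ≤ 3 := by
  rcases Nat.eq_zero_or_pos A with hA | hA
  · subst hA; simp
  · have h := pow32_aux A hA
    have : 0 ≤ 2 / Real.sqrt A := by positivity
    linarith

lemma tau_div_pow32_sum (A : ℕ) :
    ∑ g ∈ Finset.Icc 1 A, ((g.divisors.card : ℝ)) / ((g : ℝ) * Real.sqrt g) ≤ 9 := by
  have expand : ∀ g ∈ Finset.Icc 1 A, ((g.divisors.card : ℝ)) / ((g : ℝ) * Real.sqrt g)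
      = ∑ u ∈ g.divisors, 1 / ((g : ℝ) * Real.sqrt g) := by
    intro g hg
    rw [Finset.sum_const]
    simp only [nsmul_eq_mul, mul_one]
    ring
  calc ∑ g ∈ Finset.Icc 1 A, ((g.divisors.card : ℝ)) / ((g : ℝ) * Real.sqrt g)
      = ∑ g ∈ Finset.Icc 1 A, ∑ u ∈ g.divisors, 1 / ((g : ℝ) * Real.sqrt g) :=
        Finset.sum_congr rfl expand
    _ = ∑ p ∈ (Finset.Icc 1 A).sigma (fun g => g.divisors), 1 / ((p.1 : ℝ) * Real.sqrt p.1) :=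
        by rw [Finset.sum_sigma]
    _ ≤ ∑ p ∈ Finset.Icc 1 A ×ˢ Finset.Icc 1 A,
          (1 / ((p.1 : ℝ) * Real.sqrt p.1)) * (1 / ((p.2 : ℝ) * Real.sqrt p.2)) := by
        apply sum_le_sum_inj (fun p => (p.2, p.1 / p.2))
        · intro x hx y hy hxy
          simp only [Finset.mem_coe, Finset.mem_sigma, Nat.mem_divisors] at hx hy
          have hx' : x.2 * (x.1 / x.2) = x.1 := Nat.mul_div_cancel' hx.2.1
          have hy' : y.2 * (y.1 / y.2) = y.1 := Nat.mul_div_cancel' hy.2.1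
          have h1 : x.2 = y.2 := congrArg Prod.fst hxy
          have h2 : x.1 / x.2 = y.1 / y.2 := congrArg Prod.snd hxy
          have : x.1 = y.1 := by rw [← hx', h2, h1, hy']
          exact Sigma.ext this (by rw [h1])
        · intro x hx
          simp only [Finset.mem_sigma, Nat.mem_divisors, Finset.mem_Icc] at hx
          obtain ⟨⟨h1, h2⟩, hd, h0⟩ := hx
          simp only [Finset.mem_product, Finset.mem_Icc]
          have hx2pos : 1 ≤ x.2 := Nat.one_le_iff_ne_zero.2
            (by intro h; rw [h] at hd; simp only [Nat.zero_dvd] at hd; omega)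
          have hx2le : x.2 ≤ A := le_trans (Nat.le_of_dvd (by omega) hd) h2
          have hq1 : 1 ≤ x.1 / x.2 := (Nat.one_le_div_iff (by omega)).2 (Nat.le_of_dvd (by omega) hd)
          have hq2 : x.1 / x.2 ≤ A := le_trans (Nat.div_le_self _ _) h2
          exact ⟨⟨hx2pos, hx2le⟩, hq1, hq2⟩
        · intro x hx
          simp only [Finset.mem_sigma, Nat.mem_divisors, Finset.mem_Icc] at hx
          obtain ⟨⟨h1, h2⟩, hd, h0⟩ := hx
          have hx' : x.2 * (x.1 / x.2) = x.1 := Nat.mul_div_cancel' hd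
          have hc : ((x.2 : ℝ)) * (((x.1/x.2 : ℕ)) : ℝ) = ((x.1 : ℝ)) := by exact_mod_cast hx'
          apply le_of_eq
          simp only
          rw [one_div_mul_one_div]
          congr 1
          rw [← hc, Real.sqrt_mul (by positivity)]
          ring
        · intro y hy; positivity
    _ = ∑ u ∈ Finset.Icc 1 A, ∑ v ∈ Finset.Icc 1 A,
          (1 / ((u : ℝ) * Real.sqrt u)) * (1 / ((v : ℝ) * Real.sqrt v)) := by
        rw [Finset.sum_product]
    _ = (∑ u ∈ Finset.Icc 1 A, 1 / ((u : ℝ) * Real.sqrt u)) *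
          (∑ v ∈ Finset.Icc 1 A, 1 / ((v : ℝ) * Real.sqrt v)) :=
        (Finset.sum_mul_sum _ _ _ _).symm
    _ ≤ 3 * 3 := by
        apply mul_le_mul (pow32_sum A) (pow32_sum A)
          (Finset.sum_nonneg (fun v _ => by positivity)) (by norm_num)
    _ ≤ 9 := by norm_num

lemma tau_filter_sum_le (N g : ℕ) (hN : 1 ≤ N) (hg : 1 ≤ g) :
    ∑ d ∈ (Finset.Icc 1 N).filter (fun d => g ∣ d), ((d.divisors.card : ℝ))
      ≤ ((g.divisors.card : ℝ)) * ((N : ℝ) / g) * (1 + Real.log N) := by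
  have step1 : ∑ d ∈ (Finset.Icc 1 N).filter (fun d => g ∣ d), ((d.divisors.card : ℝ))
      ≤ ∑ e ∈ Finset.Icc 1 (N / g), ((g.divisors.card : ℝ)) * ((e.divisors.card : ℝ)) := by
    apply sum_le_sum_inj (fun d => d / g)
    · intro x hx y hy hxy
      simp only [Finset.mem_coe, Finset.mem_filter] at hx hy
      simp only at hxy
      have hx' := Nat.div_mul_cancel hx.2
      have hy' := Nat.div_mul_cancel hy.2
      rw [← hx', ← hy', hxy]
    · intro d hd
      simp only [Finset.mem_filter, Finset.mem_Icc] at hd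
      obtain ⟨⟨h1, h2⟩, hdvd⟩ := hd
      simp only [Finset.mem_Icc]
      exact ⟨(Nat.one_le_div_iff (by omega)).2 (Nat.le_of_dvd (by omega) hdvd),
        Nat.div_le_div_right h2⟩
    · intro d hd
      simp only [Finset.mem_filter, Finset.mem_Icc] at hd
      obtain ⟨⟨h1, h2⟩, hdvd⟩ := hd
      have : d = g * (d / g) := (Nat.mul_div_cancel' hdvd).symm
      calc ((d.divisors.card : ℝ)) = (((g * (d / g)).divisors.card : ℝ)) := by rw [← this]
        _ ≤ ((g.divisors.card : ℝ)) * (((d / g).divisors.card : ℝ)) := tau_mul_le _ _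
    · intro e he; positivity
  have step2 : ∑ e ∈ Finset.Icc 1 (N / g), ((g.divisors.card : ℝ)) * ((e.divisors.card : ℝ))
      ≤ ((g.divisors.card : ℝ)) * (((N / g : ℕ) : ℝ) * (1 + Real.log ((N / g : ℕ)))) := by
    rw [← Finset.mul_sum]
    exact mul_le_mul_of_nonneg_left (tau_sum_le _) (by positivity)
  have step3 : (((N / g : ℕ) : ℝ)) * (1 + Real.log ((N / g : ℕ)))
      ≤ ((N : ℝ) / g) * (1 + Real.log N) := by
    apply mul_le_mul Nat.cast_div_le
    · have hlog : Real.log ((N / g : ℕ)) ≤ Real.log N := by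
        rcases Nat.eq_zero_or_pos (N / g) with h | h
        · rw [h]
          simp only [Nat.cast_zero, Real.log_zero]
          exact Real.log_nonneg (by exact_mod_cast hN)
        · apply Real.log_le_log (by exact_mod_cast h)
          exact_mod_cast Nat.div_le_self N g
      linarith
    · positivity
    · positivity
  calc _ ≤ _ := step1
    _ ≤ _ := step2
    _ ≤ ((g.divisors.card : ℝ)) * (((N : ℝ) / g) * (1 + Real.log N)) :=
        mul_le_mul_of_nonneg_left step3 (by positivity)
    _ = ((g.divisors.card : ℝ)) * ((N : ℝ) / g) * (1 + Real.log N) := by ring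

lemma core_sum (N a : ℕ) (hN : 1 ≤ N) (ha : 1 ≤ a) :
    ∑ d ∈ Finset.Icc 1 N, Real.sqrt (Nat.gcd a d) * ((d.divisors.card : ℝ))
      ≤ (N : ℝ) * (1 + Real.log N) * ∑ g ∈ a.divisors, ((g.divisors.card : ℝ)) / Real.sqrt g := by
  have hsqrt : ∀ d ∈ Finset.Icc 1 N, Real.sqrt (Nat.gcd a d)
      ≤ ∑ g ∈ a.divisors.filter (fun g => g ∣ d), Real.sqrt g := by
    intro d hd
    simp only [Finset.mem_Icc] at hd
    refine Finset.single_le_sum (f := fun g : ℕ => Real.sqrt (g : ℝ))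
      (fun g _ => Real.sqrt_nonneg _) ?_
    simp only [Finset.mem_filter, Nat.mem_divisors]
    exact ⟨⟨Nat.gcd_dvd_left _ _, by omega⟩, Nat.gcd_dvd_right _ _⟩
  calc ∑ d ∈ Finset.Icc 1 N, Real.sqrt (Nat.gcd a d) * ((d.divisors.card : ℝ))
      ≤ ∑ d ∈ Finset.Icc 1 N, ∑ g ∈ a.divisors.filter (fun g => g ∣ d),
          Real.sqrt g * ((d.divisors.card : ℝ)) := by
        apply Finset.sum_le_sum
        intro d hd
        rw [← Finset.sum_mul]
        exact mul_le_mul_of_nonneg_right (hsqrt d hd) (by positivity)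
    _ = ∑ g ∈ a.divisors, ∑ d ∈ (Finset.Icc 1 N).filter (fun d => g ∣ d),
          Real.sqrt g * ((d.divisors.card : ℝ)) := by
        apply Finset.sum_comm'
        intro d g
        simp only [Finset.mem_filter, Nat.mem_divisors]
        tauto
    _ ≤ ∑ g ∈ a.divisors, Real.sqrt g * (((g.divisors.card : ℝ)) * ((N : ℝ) / g) * (1 + Real.log N)) := by
        apply Finset.sum_le_sum
        intro g hg
        simp only [Nat.mem_divisors] at hg
        have hg1 : 1 ≤ g := Nat.one_le_iff_ne_zero.2
          (by rintro rfl; exact hg.2 (Nat.eq_zero_of_zero_dvd hg.1))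
        rw [← Finset.mul_sum]
        exact mul_le_mul_of_nonneg_left (tau_filter_sum_le N g hN hg1) (Real.sqrt_nonneg _)
    _ = (N : ℝ) * (1 + Real.log N) * ∑ g ∈ a.divisors, ((g.divisors.card : ℝ)) / Real.sqrt g := by
        rw [Finset.mul_sum]
        apply Finset.sum_congr rfl
        intro g hg
        simp only [Nat.mem_divisors] at hg
        have hg1 : 1 ≤ g := Nat.one_le_iff_ne_zero.2
          (by rintro rfl; exact hg.2 (Nat.eq_zero_of_zero_dvd hg.1))
        have hgpos : (0 : ℝ) < g := by exact_mod_cast hg1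
        have hs : Real.sqrt g * Real.sqrt g = (g : ℝ) := Real.mul_self_sqrt (le_of_lt hgpos)
        have hspos : (0 : ℝ) < Real.sqrt g := Real.sqrt_pos.2 hgpos
        rw [show ((N : ℝ) / g) = (N : ℝ) / (Real.sqrt g * Real.sqrt g) by rw [hs]]
        field_simp

lemma card_icc_erase (k : ℕ) : ((Finset.Icc (-(k : ℤ)) (k : ℤ)).erase 0).card = 2 * k := by
  rw [Finset.card_erase_of_mem (by simp only [Finset.mem_Icc]; omega), Int.card_Icc]
  omega

lemma count_int_multiples (A g : ℕ) (hg : 1 ≤ g) :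
    (((Finset.Icc (-(A : ℤ)) (A : ℤ)).erase 0).filter (fun h => g ∣ h.natAbs)).card
      ≤ 2 * (A / g) := by
  rw [← card_icc_erase (A / g)]
  apply Finset.card_le_card_of_injOn (fun h : ℤ => h / (g : ℤ))
  · intro h hh
    simp only [Finset.mem_coe, Finset.mem_filter, Finset.mem_erase, Finset.mem_Icc] at hh
    obtain ⟨⟨h0, hlo, hhi⟩, hdvd⟩ := hh
    have hdvd' : (g : ℤ) ∣ h := (Int.natCast_dvd_natCast.2 hdvd).trans (Int.natAbs_dvd.2 dvd_rfl)
    set t := h / (g : ℤ) with ht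
    have hht : h = (g : ℤ) * t := (Int.mul_ediv_cancel' hdvd').symm
    have habs : t.natAbs * g = h.natAbs := by
      rw [hht, Int.natAbs_mul, Int.natAbs_natCast]; ring
    have hA : h.natAbs ≤ A := by omega
    have htA : t.natAbs ≤ A / g := Nat.le_div_iff_mul_le (by omega) |>.2 (by omega)
    have ht0 : t ≠ 0 := by intro h'; rw [h', mul_zero] at hht; exact h0 hht
    simp only [Finset.mem_coe, Finset.mem_erase, Finset.mem_Icc]
    refine ⟨ht0, ?_, ?_⟩ <;> omega
  · intro x hx y hy hxy
    simp only [Finset.mem_coe, Finset.mem_filter, Finset.mem_erase] at hx hy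
    have hdx : (g : ℤ) ∣ x := (Int.natCast_dvd_natCast.2 hx.2).trans (Int.natAbs_dvd.2 dvd_rfl)
    have hdy : (g : ℤ) ∣ y := (Int.natCast_dvd_natCast.2 hy.2).trans (Int.natAbs_dvd.2 dvd_rfl)
    simp only at hxy
    rw [← Int.mul_ediv_cancel' hdx, ← Int.mul_ediv_cancel' hdy, hxy]

lemma weight_sum_bound (A : ℕ) :
    ∑ h ∈ (Finset.Icc (-(A : ℤ)) (A : ℤ)).erase 0,
      ∑ g ∈ (h.natAbs).divisors, ((g.divisors.card : ℝ)) / Real.sqrt g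
    ≤ 18 * A := by
  set w : ℕ → ℝ := fun g => ((g.divisors.card : ℝ)) / Real.sqrt g with hw
  have hw0 : ∀ g : ℕ, 0 ≤ w g := fun g => by positivity
  have step1 : ∀ h ∈ (Finset.Icc (-(A : ℤ)) (A : ℤ)).erase 0,
      ∑ g ∈ (h.natAbs).divisors, w g = ∑ g ∈ Finset.Icc 1 A, if g ∣ h.natAbs then w g else 0 := by
    intro h hh
    simp only [Finset.mem_erase, Finset.mem_Icc] at hh
    obtain ⟨h0, hlo, hhi⟩ := hh
    rw [← Finset.sum_filter]
    congr 1
    ext g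
    simp only [Nat.mem_divisors, Finset.mem_filter, Finset.mem_Icc]
    constructor
    · rintro ⟨hd, hne⟩
      have h1 : 1 ≤ g := Nat.one_le_iff_ne_zero.2
        (by rintro rfl; exact hne (Nat.eq_zero_of_zero_dvd hd))
      have : h.natAbs ≤ A := by omega
      exact ⟨⟨h1, le_trans (Nat.le_of_dvd (by omega) hd) this⟩, hd⟩
    · rintro ⟨_, hd⟩
      exact ⟨hd, by omega⟩
  calc ∑ h ∈ (Finset.Icc (-(A : ℤ)) (A : ℤ)).erase 0, ∑ g ∈ (h.natAbs).divisors, w g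
      = ∑ h ∈ (Finset.Icc (-(A : ℤ)) (A : ℤ)).erase 0, ∑ g ∈ Finset.Icc 1 A,
          if g ∣ h.natAbs then w g else 0 := Finset.sum_congr rfl step1
    _ = ∑ g ∈ Finset.Icc 1 A, ∑ h ∈ (Finset.Icc (-(A : ℤ)) (A : ℤ)).erase 0,
          if g ∣ h.natAbs then w g else 0 := Finset.sum_comm
    _ ≤ ∑ g ∈ Finset.Icc 1 A, 2 * (A : ℝ) * (((g.divisors.card : ℝ)) / ((g : ℝ) * Real.sqrt g)) := by
        apply Finset.sum_le_sum
        intro g hg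
        simp only [Finset.mem_Icc] at hg
        rw [← Finset.sum_filter, Finset.sum_const, nsmul_eq_mul]
        have hcount := count_int_multiples A g hg.1
        have hgpos : (0 : ℝ) < g := by exact_mod_cast hg.1
        have hspos : (0 : ℝ) < Real.sqrt g := Real.sqrt_pos.2 hgpos
        calc ((((Finset.Icc (-(A : ℤ)) (A : ℤ)).erase 0).filter (fun h => g ∣ h.natAbs)).card : ℝ) * w g
            ≤ ((2 * (A / g) : ℕ) : ℝ) * w g :=
              mul_le_mul_of_nonneg_right (by exact_mod_cast hcount) (hw0 g)
          _ ≤ (2 * ((A : ℝ) / g)) * w g := by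
              apply mul_le_mul_of_nonneg_right _ (hw0 g)
              push_cast
              have := Nat.cast_div_le (α := ℝ) (m := A) (n := g)
              linarith
          _ = 2 * (A : ℝ) * (((g.divisors.card : ℝ)) / ((g : ℝ) * Real.sqrt g)) := by
              rw [hw]
              field_simp
              try ring
    _ = 2 * (A : ℝ) * ∑ g ∈ Finset.Icc 1 A, ((g.divisors.card : ℝ)) / ((g : ℝ) * Real.sqrt g) := by
        rw [Finset.mul_sum]
    _ ≤ 2 * (A : ℝ) * 9 :=
        mul_le_mul_of_nonneg_left (tau_div_pow32_sum A) (by positivity)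
    _ ≤ 18 * A := by linarith

lemma main_est (N A : ℕ) (hN : 1 ≤ N) :
    ∑ d ∈ Finset.Icc 1 N, ∑ h ∈ (Finset.Icc (-(A : ℤ)) (A : ℤ)).erase 0,
      Real.sqrt (Int.gcd h (d : ℤ)) * Real.sqrt d * ((d.divisors.card : ℝ))
    ≤ 18 * (A : ℝ) * ((N : ℝ) * Real.sqrt N * (1 + Real.log N)) := by
  have hlogN : 0 ≤ Real.log N := Real.log_nonneg (by exact_mod_cast hN)
  rw [Finset.sum_comm]
  have hinner : ∀ h ∈ (Finset.Icc (-(A : ℤ)) (A : ℤ)).erase 0,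
      ∑ d ∈ Finset.Icc 1 N, Real.sqrt (Int.gcd h (d : ℤ)) * Real.sqrt d * ((d.divisors.card : ℝ))
      ≤ Real.sqrt N * ((N : ℝ) * (1 + Real.log N) *
          ∑ g ∈ (h.natAbs).divisors, ((g.divisors.card : ℝ)) / Real.sqrt g) := by
    intro h hh
    simp only [Finset.mem_erase, Finset.mem_Icc] at hh
    have ha : 1 ≤ h.natAbs := by
      rcases hh with ⟨h0, _⟩
      omega
    have hgcd : ∀ d : ℕ, Int.gcd h (d : ℤ) = Nat.gcd h.natAbs d := by
      intro d
      simp [Int.gcd]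
    calc ∑ d ∈ Finset.Icc 1 N, Real.sqrt (Int.gcd h (d : ℤ)) * Real.sqrt d * ((d.divisors.card : ℝ))
        ≤ ∑ d ∈ Finset.Icc 1 N, Real.sqrt N * (Real.sqrt (Nat.gcd h.natAbs d) * ((d.divisors.card : ℝ))) := by
          apply Finset.sum_le_sum
          intro d hd
          simp only [Finset.mem_Icc] at hd
          rw [hgcd d]
          have h1 : Real.sqrt d ≤ Real.sqrt N := Real.sqrt_le_sqrt (by exact_mod_cast hd.2)
          have h2 : (0 : ℝ) ≤ Real.sqrt (Nat.gcd h.natAbs d) := Real.sqrt_nonneg _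
          have h3 : (0 : ℝ) ≤ ((d.divisors.card : ℝ)) := by positivity
          calc Real.sqrt (Nat.gcd h.natAbs d) * Real.sqrt d * ((d.divisors.card : ℝ))
              ≤ Real.sqrt (Nat.gcd h.natAbs d) * Real.sqrt N * ((d.divisors.card : ℝ)) := by
                apply mul_le_mul_of_nonneg_right _ h3
                exact mul_le_mul_of_nonneg_left h1 h2
            _ = Real.sqrt N * (Real.sqrt (Nat.gcd h.natAbs d) * ((d.divisors.card : ℝ))) := by ring
      _ = Real.sqrt N * ∑ d ∈ Finset.Icc 1 N, Real.sqrt (Nat.gcd h.natAbs d) * ((d.divisors.card : ℝ)) := by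
          rw [Finset.mul_sum]
      _ ≤ Real.sqrt N * ((N : ℝ) * (1 + Real.log N) *
            ∑ g ∈ (h.natAbs).divisors, ((g.divisors.card : ℝ)) / Real.sqrt g) :=
          mul_le_mul_of_nonneg_left (core_sum N h.natAbs hN ha) (Real.sqrt_nonneg _)
  calc ∑ h ∈ (Finset.Icc (-(A : ℤ)) (A : ℤ)).erase 0, ∑ d ∈ Finset.Icc 1 N,
        Real.sqrt (Int.gcd h (d : ℤ)) * Real.sqrt d * ((d.divisors.card : ℝ))
      ≤ ∑ h ∈ (Finset.Icc (-(A : ℤ)) (A : ℤ)).erase 0, Real.sqrt N * ((N : ℝ) * (1 + Real.log N) *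
          ∑ g ∈ (h.natAbs).divisors, ((g.divisors.card : ℝ)) / Real.sqrt g) :=
        Finset.sum_le_sum hinner
    _ = Real.sqrt N * ((N : ℝ) * (1 + Real.log N)) *
          ∑ h ∈ (Finset.Icc (-(A : ℤ)) (A : ℤ)).erase 0,
            ∑ g ∈ (h.natAbs).divisors, ((g.divisors.card : ℝ)) / Real.sqrt g := by
        rw [Finset.mul_sum]
        apply Finset.sum_congr rfl
        intros; ring
    _ ≤ Real.sqrt N * ((N : ℝ) * (1 + Real.log N)) * (18 * A) := by
        apply mul_le_mul_of_nonneg_left (weight_sum_bound A)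
        have : (0:ℝ) ≤ Real.sqrt N := Real.sqrt_nonneg _
        have h1 : (0:ℝ) ≤ (N:ℝ) := by positivity
        positivity
    _ = 18 * (A : ℝ) * ((N : ℝ) * Real.sqrt N * (1 + Real.log N)) := by ring

lemma one_add_log_le (ε y : ℝ) (hε : 0 < ε) (hy : 1 ≤ y) :
    1 + Real.log y ≤ (1 + 1/ε) * y ^ ε := by
  have hypos : (0:ℝ) < y := by linarith
  have h1 : (1:ℝ) ≤ y ^ ε := Real.one_le_rpow hy (le_of_lt hε)
  have h2 : Real.log (y ^ ε) = ε * Real.log y := Real.log_rpow hypos ε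
  have h3 : Real.log (y ^ ε) ≤ y ^ ε - 1 := Real.log_le_sub_one_of_pos (by linarith)
  have h4 : Real.log y ≤ (y ^ ε) / ε := by
    rw [le_div_iff₀ hε, mul_comm, ← h2]
    linarith
  have h5 : (y ^ ε) / ε = (1/ε) * y ^ ε := by ring
  nlinarith

set_option maxHeartbeats 1000000 in
theorem gcd_divisor_sum_bound :
    ∀ ε : ℝ, 0 < ε → ∃ K : ℝ, 0 < K ∧
      ∀ (C M : ℝ) (n₁ : ℕ), 1 ≤ C → 1 ≤ M → 0 < n₁ →
        ∑ q ∈ Finset.filter (fun q => n₁ ∣ q) (Finset.Ioc ⌊C⌋₊ ⌊2 * C⌋₊),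
          ∑ m ∈ Finset.Icc (-(⌊M⌋ : ℤ)) ⌊M⌋,
            ∑ m' ∈ (Finset.Icc (-(⌊M⌋ : ℤ)) ⌊M⌋).erase m,
              ((Int.gcd (m - m') ((q / n₁ : ℕ) : ℤ) : ℝ)) ^ ((1 : ℝ) / 2)
                * ((q / n₁ : ℕ) : ℝ) ^ ((1 : ℝ) / 2)
                * ((Nat.divisors (q / n₁)).card : ℝ)
          ≤ K * M ^ 2 * C ^ ((3 : ℝ) / 2 + ε) * (n₁ : ℝ) ^ (-(1 : ℝ) / 2) := by
  intro ε hε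
  refine ⟨108 * (1 + 1/ε) * (2:ℝ) ^ ((3:ℝ)/2 + ε), by positivity, ?_⟩
  intro C M n₁ hC hM hn₁
  set b : ℤ := ⌊M⌋ with hbdef
  have hb1 : 1 ≤ b := Int.le_floor.2 (by exact_mod_cast hM)
  set B : ℕ := b.toNat with hBdef
  have hBb : (B : ℤ) = b := Int.toNat_of_nonneg (by omega)
  have hBM : (B : ℝ) ≤ M := by
    have h1 : ((B : ℤ) : ℝ) ≤ M := by rw [hBb]; exact Int.floor_le M
    exact_mod_cast h1
  set N : ℕ := ⌊2 * C⌋₊ / n₁ with hNdef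
  -- define the sqrt-form inner sums
  set T : ℕ → ℝ := fun d => ∑ h ∈ (Finset.Icc (-((2*B : ℕ) : ℤ)) ((2*B : ℕ) : ℤ)).erase 0,
    Real.sqrt (Int.gcd h (d : ℤ)) * Real.sqrt d * ((d.divisors.card : ℝ)) with hTdef
  set F : ℕ → ℝ := fun d => ∑ m ∈ Finset.Icc (-b) b, ∑ m' ∈ (Finset.Icc (-b) b).erase m,
      ((Int.gcd (m - m') (d : ℤ) : ℝ)) ^ ((1 : ℝ) / 2)
        * ((d : ℝ)) ^ ((1 : ℝ) / 2) * ((d.divisors.card : ℝ)) with hFdef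
  -- Step A
  have stepA : ∑ q ∈ Finset.filter (fun q => n₁ ∣ q) (Finset.Ioc ⌊C⌋₊ ⌊2 * C⌋₊),
      ∑ m ∈ Finset.Icc (-b) b, ∑ m' ∈ (Finset.Icc (-b) b).erase m,
        ((Int.gcd (m - m') ((q / n₁ : ℕ) : ℤ) : ℝ)) ^ ((1 : ℝ) / 2)
          * ((q / n₁ : ℕ) : ℝ) ^ ((1 : ℝ) / 2) * (((q / n₁).divisors.card : ℝ))
      ≤ ∑ d ∈ Finset.Icc 1 N, F d := by
    apply sum_le_sum_inj (fun q => q / n₁)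
    · intro x hx y hy hxy
      simp only [Finset.mem_coe, Finset.mem_filter] at hx hy
      simp only at hxy
      rw [← Nat.div_mul_cancel hx.2, ← Nat.div_mul_cancel hy.2, hxy]
    · intro q hq
      simp only [Finset.mem_filter, Finset.mem_Ioc] at hq
      obtain ⟨⟨hlo, hhi⟩, hdvd⟩ := hq
      have hC1 : 1 ≤ ⌊C⌋₊ := Nat.le_floor (by exact_mod_cast hC)
      simp only [Finset.mem_Icc]
      constructor
      · exact (Nat.one_le_div_iff hn₁).2 (Nat.le_of_dvd (by omega) hdvd)
      · exact Nat.div_le_div_right hhi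
    · intro q hq
      exact le_of_eq rfl
    · intro d hd
      apply Finset.sum_nonneg
      intro m hm
      apply Finset.sum_nonneg
      intro m' hm'
      positivity
  -- Step B
  have stepB : ∀ d, F d ≤ (2 * (B:ℝ) + 1) * T d := by
    intro d
    have hinner : ∀ m ∈ Finset.Icc (-b) b,
        ∑ m' ∈ (Finset.Icc (-b) b).erase m,
          ((Int.gcd (m - m') (d : ℤ) : ℝ)) ^ ((1 : ℝ) / 2)
            * ((d : ℝ)) ^ ((1 : ℝ) / 2) * ((d.divisors.card : ℝ)) ≤ T d := by
      intro m hm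
      simp only [Finset.mem_Icc] at hm
      apply sum_le_sum_inj (fun m' => m - m')
      · intro x hx y hy hxy
        simp only at hxy
        omega
      · intro m' hm'
        simp only [Finset.mem_erase, Finset.mem_Icc] at hm'
        simp only [Finset.mem_erase, Finset.mem_Icc]
        push_cast [hBb]
        constructor
        · omega
        · omega
      · intro m' hm'
        apply le_of_eq
        rw [← Real.sqrt_eq_rpow, ← Real.sqrt_eq_rpow]
      · intro h hh
        positivity
    calc F d ≤ ∑ m ∈ Finset.Icc (-b) b, T d := Finset.sum_le_sum hinner
      _ = ((Finset.Icc (-b) b).card : ℝ) * T d := by rw [Finset.sum_const, nsmul_eq_mul]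
      _ = (2 * (B:ℝ) + 1) * T d := by
          rw [Int.card_Icc]
          congr 1
          have : (b + 1 - -b).toNat = 2 * B + 1 := by omega
          rw [this]
          push_cast
          ring
  rcases Nat.eq_zero_or_pos N with hN0 | hN1
  -- trivial case N = 0
  · have : ∑ d ∈ Finset.Icc 1 N, F d = 0 := by
      rw [hN0]
      simp
    have hle0 := stepA
    rw [this] at hle0
    refine le_trans hle0 ?_
    positivity
  -- main case
  · have hTsum : ∑ d ∈ Finset.Icc 1 N, T d
        ≤ 18 * ((2*B : ℕ) : ℝ) * ((N : ℝ) * Real.sqrt N * (1 + Real.log N)) := by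
      rw [hTdef]
      exact main_est N (2*B) hN1
    have hTnonneg : ∀ d ∈ Finset.Icc 1 N, 0 ≤ T d := by
      intro d hd
      apply Finset.sum_nonneg
      intro h hh
      positivity
    have hchain : ∑ q ∈ Finset.filter (fun q => n₁ ∣ q) (Finset.Ioc ⌊C⌋₊ ⌊2 * C⌋₊),
        ∑ m ∈ Finset.Icc (-b) b, ∑ m' ∈ (Finset.Icc (-b) b).erase m,
          ((Int.gcd (m - m') ((q / n₁ : ℕ) : ℤ) : ℝ)) ^ ((1 : ℝ) / 2)
            * ((q / n₁ : ℕ) : ℝ) ^ ((1 : ℝ) / 2) * (((q / n₁).divisors.card : ℝ))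
        ≤ (2 * (B:ℝ) + 1) * (18 * ((2*B : ℕ) : ℝ) * ((N : ℝ) * Real.sqrt N * (1 + Real.log N))) := by
      refine le_trans stepA ?_
      calc ∑ d ∈ Finset.Icc 1 N, F d ≤ ∑ d ∈ Finset.Icc 1 N, (2 * (B:ℝ) + 1) * T d :=
            Finset.sum_le_sum (fun d _ => stepB d)
        _ = (2 * (B:ℝ) + 1) * ∑ d ∈ Finset.Icc 1 N, T d := by rw [Finset.mul_sum]
        _ ≤ _ := by
            apply mul_le_mul_of_nonneg_left hTsum
            have : (0:ℝ) ≤ (B:ℝ) := by positivity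
            linarith
    -- numeric finish
    have hlogN : 0 ≤ Real.log N := Real.log_nonneg (by exact_mod_cast hN1)
    set X : ℝ := 2 * C / n₁ with hXdef
    have hXpos : 0 < X := by
      apply div_pos (by linarith) (by exact_mod_cast hn₁)
    have hNX : (N : ℝ) ≤ X := by
      calc (N : ℝ) ≤ (⌊2*C⌋₊ : ℝ) / n₁ := Nat.cast_div_le
        _ ≤ 2 * C / n₁ := by
            gcongr
            exact Nat.floor_le (by positivity)
    have hsqrtNX : Real.sqrt N ≤ Real.sqrt X := Real.sqrt_le_sqrt hNX
    have hNpos : (0:ℝ) ≤ (N:ℝ) := by positivity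
    have hprod : (N : ℝ) * Real.sqrt N ≤ X * Real.sqrt X :=
      mul_le_mul hNX hsqrtNX (Real.sqrt_nonneg _) (le_of_lt hXpos)
    have hXX : X * Real.sqrt X = X ^ ((3:ℝ)/2) := by
      rw [Real.sqrt_eq_rpow]
      nth_rewrite 1 [← Real.rpow_one X]
      rw [← Real.rpow_add hXpos]
      norm_num
    have hn₁R : (1:ℝ) ≤ (n₁:ℝ) := by exact_mod_cast hn₁
    have hX2C : X ≤ 2 * C := by
      rw [hXdef]
      exact div_le_self (by linarith) hn₁R
    have hlog2C : Real.log N ≤ Real.log (2 * C) := by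
      exact Real.log_le_log (by exact_mod_cast hN1) (le_trans hNX hX2C)
    have hlogbound : 1 + Real.log N ≤ (1 + 1/ε) * (2*C) ^ ε := by
      calc 1 + Real.log N ≤ 1 + Real.log (2*C) := by linarith
        _ ≤ (1 + 1/ε) * (2*C) ^ ε := one_add_log_le ε (2*C) hε (by linarith)
    -- combine
    have hmid : (N : ℝ) * Real.sqrt N * (1 + Real.log N)
        ≤ X ^ ((3:ℝ)/2) * ((1 + 1/ε) * (2*C) ^ ε) := by
      rw [← hXX]
      apply mul_le_mul hprod hlogbound (by linarith) (by positivity)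
    have hB2M : 2 * (B:ℝ) + 1 ≤ 3 * M := by linarith
    have hA2M : ((2*B : ℕ) : ℝ) ≤ 2 * M := by push_cast; linarith
    have hfinal1 : (2 * (B:ℝ) + 1) * (18 * ((2*B : ℕ) : ℝ) * ((N : ℝ) * Real.sqrt N * (1 + Real.log N)))
        ≤ 3 * M * (18 * (2 * M) * (X ^ ((3:ℝ)/2) * ((1 + 1/ε) * (2*C) ^ ε))) := by
      have h0 : (0:ℝ) ≤ (N : ℝ) * Real.sqrt N * (1 + Real.log N) := by
        apply mul_nonneg (mul_nonneg hNpos (Real.sqrt_nonneg _)) (by linarith)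
      have hcoef : (2 * (B:ℝ) + 1) * (18 * ((2*B : ℕ) : ℝ)) ≤ 3 * M * (18 * (2 * M)) := by
        have hB0 : (0:ℝ) ≤ (B:ℝ) := by positivity
        push_cast
        nlinarith [hBM, hM]
      calc (2 * (B:ℝ) + 1) * (18 * ((2*B : ℕ) : ℝ) * ((N : ℝ) * Real.sqrt N * (1 + Real.log N)))
          = ((2 * (B:ℝ) + 1) * (18 * ((2*B : ℕ) : ℝ))) * ((N : ℝ) * Real.sqrt N * (1 + Real.log N)) := by
            ring
        _ ≤ (3 * M * (18 * (2 * M))) * (X ^ ((3:ℝ)/2) * ((1 + 1/ε) * (2*C) ^ ε)) := by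
            apply mul_le_mul hcoef hmid h0
            have hM0 : (0:ℝ) < M := by linarith
            positivity
        _ = 3 * M * (18 * (2 * M) * (X ^ ((3:ℝ)/2) * ((1 + 1/ε) * (2*C) ^ ε))) := by ring
    -- rpow algebra
    have hrpow : X ^ ((3:ℝ)/2) * (2*C) ^ ε ≤ 2 ^ ((3:ℝ)/2 + ε) * C ^ ((3:ℝ)/2 + ε) * (n₁:ℝ) ^ (-(1:ℝ)/2) := by
      have hn₁pos : (0:ℝ) < (n₁:ℝ) := by exact_mod_cast hn₁
      have h2C : (0:ℝ) < 2 * C := by linarith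
      have hXeq : X ^ ((3:ℝ)/2) = (2*C) ^ ((3:ℝ)/2) * (n₁:ℝ) ^ (-((3:ℝ)/2)) := by
        rw [hXdef, Real.div_rpow (by linarith) (le_of_lt hn₁pos),
          Real.rpow_neg (le_of_lt hn₁pos)]
        ring
      rw [hXeq]
      have hmul : (2*C) ^ ((3:ℝ)/2) * (n₁:ℝ) ^ (-((3:ℝ)/2)) * (2*C) ^ ε
          = ((2*C) ^ ((3:ℝ)/2) * (2*C) ^ ε) * (n₁:ℝ) ^ (-((3:ℝ)/2)) := by ring
      rw [hmul, ← Real.rpow_add h2C, Real.mul_rpow (by norm_num) (by linarith)]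
      apply mul_le_mul_of_nonneg_left
      · apply Real.rpow_le_rpow_of_exponent_le (by exact_mod_cast hn₁)
        rw [neg_div]
        linarith [hε]
      · positivity
    refine le_trans hchain (le_trans hfinal1 ?_)
    have hexp : 3 * M * (18 * (2 * M) * (X ^ ((3:ℝ)/2) * ((1 + 1/ε) * (2*C) ^ ε)))
        = 108 * (1 + 1/ε) * M^2 * (X ^ ((3:ℝ)/2) * (2*C) ^ ε) := by ring
    rw [hexp]
    calc 108 * (1 + 1/ε) * M^2 * (X ^ ((3:ℝ)/2) * (2*C) ^ ε)
        ≤ 108 * (1 + 1/ε) * M^2 * (2 ^ ((3:ℝ)/2 + ε) * C ^ ((3:ℝ)/2 + ε) * (n₁:ℝ) ^ (-(1:ℝ)/2)) := by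
          apply mul_le_mul_of_nonneg_left hrpow
          have hM0 : (0:ℝ) < M := by linarith
          positivity
      _ = 108 * (1 + 1/ε) * (2:ℝ) ^ ((3:ℝ)/2 + ε) * M ^ 2 * C ^ ((3:ℝ)/2 + ε) * (n₁ : ℝ) ^ (-(1:ℝ)/2) := by
          ring
end
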